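/- For each choice of graph matrix M ∈ {adjacency matrix A, Laplacian L, normalized Laplacian L̂}: if two finite simple graphs G and H (with no isolated vertices) are PSWL-indistinguishable, then G and H are EPWL-indistinguishable with respect to M. (The expressive power of EPWL is bounded by PSWL in distinguishing non-isomorphic graphs.) -/

import Mathlib

open scoped Classical
open Matrix BigOperators

noncomputable section

namespace EPWL

/-! ### Generic node-coloring refinement with pairwise features in a type `α` -/

/-- The common nested type of round-`l` colors: `C 0 = Unit`,
`C (l+1) = C l × Multiset (C l × α)`. -/
def Color (α : Type) : ℕ → Type
  | 0 => Unit
  | l + 1 => Color α l × Multiset (Color α l × α)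

/-- The color refinement: `χ⁰(u) = ()` and
`χ^{l+1}(u) = (χ^l(u), {{(χ^l(v), f u v) : v}})`. -/
def colorFn {V : Type*} [Fintype V] {α : Type} (f : V → V → α) :
    (l : ℕ) → V → Color α l
  | 0 => fun _ => ()
  | l + 1 => fun u =>
      (colorFn f l u, Finset.univ.val.map fun v => (colorFn f l v, f u v))

/-- Two graphs (presented through their pairwise-feature functions) are
indistinguishable by the node-coloring refinement: at every round, the
multisets of node colors agree. -/
def NodeIndist {V W : Type*} [Fintype V] [Fintype W] {α : Type}
    (f : V → V → α) (g : W → W → α) : Prop :=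
  ∀ l : ℕ, Finset.univ.val.map (colorFn f l) = Finset.univ.val.map (colorFn g l)

/-- Atomic type of an ordered vertex pair: `0` if equal, `1` if adjacent,
`2` otherwise. -/
def atp {V : Type*} (G : SimpleGraph V) (u v : V) : ℕ :=
  if u = v then 0 else if G.Adj u v then 1 else 2

/-- 1-WL indistinguishability. -/
def WL1Indist {V W : Type*} [Fintype V] [Fintype W]
    (G : SimpleGraph V) (H : SimpleGraph W) : Prop :=
  NodeIndist (atp G) (atp H)

/-! ### Graph matrices -/

/-- Real adjacency matrix. -/
def adjM {V : Type*} [Fintype V] (G : SimpleGraph V) : Matrix V V ℝ :=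
  G.adjMatrix ℝ

/-- Real (diagonal) degree matrix. -/
def degM {V : Type*} [Fintype V] (G : SimpleGraph V) : Matrix V V ℝ :=
  Matrix.diagonal fun v => (G.degree v : ℝ)

/-- Laplacian matrix `L = D - A`. -/
def lapM {V : Type*} [Fintype V] (G : SimpleGraph V) : Matrix V V ℝ :=
  degM G - adjM G

/-- The diagonal matrix `D^{-1/2}`. -/
def invSqrtDegM {V : Type*} [Fintype V] (G : SimpleGraph V) : Matrix V V ℝ :=
  Matrix.diagonal fun v => (Real.sqrt (G.degree v))⁻¹

/-- Normalized Laplacian `L̂ = D^{-1/2} L D^{-1/2}`. -/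
def normLapM {V : Type*} [Fintype V] (G : SimpleGraph V) : Matrix V V ℝ :=
  invSqrtDegM G * lapM G * invSqrtDegM G

/-- Normalized adjacency matrix `Â = D^{-1/2} A D^{-1/2}`. -/
def normAdjM {V : Type*} [Fintype V] (G : SimpleGraph V) : Matrix V V ℝ :=
  invSqrtDegM G * adjM G * invSqrtDegM G

/-- The diagonal matrix `D⁻¹` of inverse degrees. -/
def invDegM {V : Type*} [Fintype V] (G : SimpleGraph V) : Matrix V V ℝ :=
  Matrix.diagonal fun v => ((G.degree v : ℝ))⁻¹

/-- The random-walk matrix `D⁻¹ A`. -/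
def rwM {V : Type*} [Fintype V] (G : SimpleGraph V) : Matrix V V ℝ :=
  invDegM G * adjM G

/-- The all-ones matrix `J`. -/
def allOnes (V : Type*) : Matrix V V ℝ := Matrix.of fun _ _ => 1

/-- A choice among the three graph matrices `A`, `L`, `L̂`. -/
inductive MatChoice | adj | lap | normLap

/-- The graph matrix associated with a choice. -/
def matOf {V : Type*} [Fintype V] (c : MatChoice) (G : SimpleGraph V) :
    Matrix V V ℝ :=
  match c with
  | .adj => adjM G
  | .lap => lapM G
  | .normLap => normLapM G

/-! ### Spectral decompositions and the eigenspace projection invariant -/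

/-- `IsSpectralDecomp M Λ P` says: `Λ` is the (finite) set of distinct
eigenvalues of the symmetric matrix `M` and, for `lam ∈ Λ`, `P lam` is the
orthogonal projection onto the eigenspace of `lam`. This is characterized
uniquely by: the `P lam` are symmetric idempotent nonzero matrices,
pairwise "orthogonal" (`P lam * P mu = 0` for `lam ≠ mu`), summing to the
identity, with `∑ lam • P lam = M`. -/
structure IsSpectralDecomp {n : Type*} [Fintype n]
    (M : Matrix n n ℝ) (Λ : Finset ℝ) (P : ℝ → Matrix n n ℝ) : Prop where
  symm : ∀ lam ∈ Λ, (P lam)ᵀ = P lam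
  idem : ∀ lam ∈ Λ, P lam * P lam = P lam
  nonzero : ∀ lam ∈ Λ, P lam ≠ 0
  orth : ∀ lam ∈ Λ, ∀ mu ∈ Λ, lam ≠ mu → P lam * P mu = 0
  sum_one : ∑ lam ∈ Λ, P lam = 1
  sum_smul : ∑ lam ∈ Λ, lam • P lam = M

/-- The eigenspace projection invariant
`𝒫^M(u,v) = {{(lam, P_lam(u,v)) : lam eigenvalue of M}}`. -/
def projInv {n : Type*} (Λ : Finset ℝ) (P : ℝ → Matrix n n ℝ) (u v : n) :
    Multiset (ℝ × ℝ) :=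
  Λ.val.map fun lam => (lam, P lam u v)

/-! ### Subgraph Weisfeiler-Lehman variants (SWL, PSWL) and 3-WL -/

/-- Round-`l` color type for SWL. -/
def SColor : ℕ → Type
  | 0 => ℕ
  | l + 1 => SColor l × Multiset (SColor l × ℕ)

/-- Initial pair color: `1` on the diagonal, `0` off it. -/
def initPairColor {V : Type*} (u v : V) : ℕ := if u = v then 1 else 0

/-- The SWL pair-coloring. -/
def swl {V : Type*} [Fintype V] (G : SimpleGraph V) :
    (l : ℕ) → V → V → SColor l
  | 0 => fun u v => initPairColor u v
  | l + 1 => fun u v =>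
      (swl G l u v, Finset.univ.val.map fun w => (swl G l u w, atp G v w))

/-- SWL indistinguishability. -/
def SWLIndist {V W : Type*} [Fintype V] [Fintype W]
    (G : SimpleGraph V) (H : SimpleGraph W) : Prop :=
  ∀ l : ℕ,
    ((Finset.univ : Finset (V × V)).val.map fun p => swl G l p.1 p.2) =
      ((Finset.univ : Finset (W × W)).val.map fun p => swl H l p.1 p.2)

/-- Round-`l` color type for PSWL. -/
def PSColor : ℕ → Type
  | 0 => ℕ
  | l + 1 => PSColor l × PSColor l × Multiset (PSColor l × ℕ)

/-- The PSWL pair-coloring. -/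
def pswl {V : Type*} [Fintype V] (G : SimpleGraph V) :
    (l : ℕ) → V → V → PSColor l
  | 0 => fun u v => initPairColor u v
  | l + 1 => fun u v =>
      (pswl G l u v, pswl G l v v,
        Finset.univ.val.map fun w => (pswl G l u w, atp G v w))

/-- PSWL indistinguishability. -/
def PSWLIndist {V W : Type*} [Fintype V] [Fintype W]
    (G : SimpleGraph V) (H : SimpleGraph W) : Prop :=
  ∀ l : ℕ,
    ((Finset.univ : Finset (V × V)).val.map fun p => pswl G l p.1 p.2) =
      ((Finset.univ : Finset (W × W)).val.map fun p => pswl H l p.1 p.2)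

/-- Round-`l` color type for 3-WL; the initial color records which of
`u, v, w` coincide and which of the pairs are edges. -/
def W3Color : ℕ → Type
  | 0 => Bool × Bool × Bool × Bool × Bool × Bool
  | l + 1 => W3Color l × Multiset (W3Color l × W3Color l × W3Color l)

/-- The 3-WL triple-coloring. -/
def wl3 {V : Type*} [Fintype V] (G : SimpleGraph V) :
    (l : ℕ) → V → V → V → W3Color l
  | 0 => fun u v w =>
      (decide (u = v), decide (u = w), decide (v = w),
        decide (G.Adj u v), decide (G.Adj u w), decide (G.Adj v w))
  | l + 1 => fun u v w =>
      (wl3 G l u v w,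
        Finset.univ.val.map fun z =>
          (wl3 G l z v w, wl3 G l u z w, wl3 G l u v z))

/-- 3-WL indistinguishability. -/
def WL3Indist {V W : Type*} [Fintype V] [Fintype W]
    (G : SimpleGraph V) (H : SimpleGraph W) : Prop :=
  ∀ l : ℕ,
    ((Finset.univ : Finset (V × V × V)).val.map fun p => wl3 G l p.1 p.2.1 p.2.2) =
      ((Finset.univ : Finset (W × W × W)).val.map fun p => wl3 H l p.1 p.2.1 p.2.2)

/-! ### Distances -/

/-- The shortest-path distance, valued in `ℕ∞`. -/
def spd {V : Type*} (G : SimpleGraph V) (u v : V) : ℕ∞ := G.edist u v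

/-- The four Penrose conditions characterizing the Moore–Penrose
pseudoinverse `X` of `B`. -/
def IsMoorePenrose {n : Type*} [Fintype n] (B X : Matrix n n ℝ) : Prop :=
  B * X * B = B ∧ X * B * X = X ∧ (B * X)ᵀ = B * X ∧ (X * B)ᵀ = X * B

/-- Resistance distance computed from (a Moore–Penrose pseudoinverse of)
the Laplacian: `X(u,u) + X(v,v) - 2X(u,v)` for vertices in the same
connected component, and `∞` otherwise. -/
def rdOf {V : Type*} (G : SimpleGraph V) (X : Matrix V V ℝ) (u v : V) :
    WithTop ℝ :=
  if G.Reachable u v then ((X u u + X v v - 2 * X u v : ℝ) : WithTop ℝ) else ⊤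

/-- Matrix exponential, as the everywhere-convergent power series
`exp B = ∑ Bⁿ/n!`. -/
def matExp {V : Type*} [Fintype V] (B : Matrix V V ℝ) : Matrix V V ℝ :=
  ∑' n : ℕ, ((n.factorial : ℝ))⁻¹ • B ^ n

/-! ### Connectivity notions -/

/-- Number of connected components. -/
def numComponents {V : Type*} (G : SimpleGraph V) : ℕ :=
  Nat.card G.ConnectedComponent

/-- A cut vertex: deleting it (and all incident edges) strictly increases
the number of connected components. -/
def IsCutVertex {V : Type*} (G : SimpleGraph V) (v : V) : Prop :=
  numComponents G < numComponents (G.induce {w : V | w ≠ v})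

/-- A cut edge: it is an edge whose deletion strictly increases the number
of connected components. -/
def IsCutEdge {V : Type*} (G : SimpleGraph V) (e : Sym2 V) : Prop :=
  e ∈ G.edgeSet ∧ numComponents G < numComponents (G.deleteEdges {e})


/-! ### Auxiliary lemmas for `pswl_bounds_epwl` -/

section AuxLemmas

/-- Transfer a multiset-map equality along a "key" function. -/
lemma key_map {A B K C : Type*} {s : Multiset A} {t : Multiset B}
    {f : A → K} {g : B → K} {F : A → C} {Gc : B → C}
    (h : s.map f = t.map g) (hc : ∀ a b, f a = g b → F a = Gc b) :
    s.map F = t.map Gc := by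
  rw [← Multiset.rel_eq] at h ⊢
  rw [Multiset.rel_map] at h ⊢
  exact h.mono fun a _ b _ hab => hc a b hab

variable {V W : Type*} [Fintype V] [Fintype W]

lemma pswl_fst {G : SimpleGraph V} {H : SimpleGraph W} {l : ℕ} {u v : V} {x y : W}
    (h : pswl G (l + 1) u v = pswl H (l + 1) x y) :
    pswl G l u v = pswl H l x y :=
  congrArg (fun c : PSColor l × PSColor l × Multiset (PSColor l × ℕ) => c.1) h

lemma pswl_snd {G : SimpleGraph V} {H : SimpleGraph W} {l : ℕ} {u v : V} {x y : W}
    (h : pswl G (l + 1) u v = pswl H (l + 1) x y) :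
    pswl G l v v = pswl H l y y :=
  congrArg (fun c : PSColor l × PSColor l × Multiset (PSColor l × ℕ) => c.2.1) h

lemma pswl_thd {G : SimpleGraph V} {H : SimpleGraph W} {l : ℕ} {u v : V} {x y : W}
    (h : pswl G (l + 1) u v = pswl H (l + 1) x y) :
    (Finset.univ.val.map fun w => (pswl G l u w, atp G v w)) =
      (Finset.univ.val.map fun z => (pswl H l x z, atp H y z)) :=
  congrArg (fun c : PSColor l × PSColor l × Multiset (PSColor l × ℕ) => c.2.2) h

lemma pswl_add {G : SimpleGraph V} {H : SimpleGraph W} :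
    ∀ (k r : ℕ) {u v : V} {x y : W},
      pswl G (r + k) u v = pswl H (r + k) x y → pswl G r u v = pswl H r x y
  | 0, _, _, _, _, _, h => h
  | k + 1, r, _, _, _, _, h => pswl_add k r (pswl_fst h)

lemma pswl_le {G : SimpleGraph V} {H : SimpleGraph W} {r' r : ℕ} (hle : r' ≤ r)
    {u v : V} {x y : W} (h : pswl G r u v = pswl H r x y) :
    pswl G r' u v = pswl H r' x y := by
  obtain ⟨k, rfl⟩ := Nat.le.dest hle
  exact pswl_add k r' h

lemma atp_comm (G : SimpleGraph V) (u v : V) : atp G u v = atp G v u := by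
  unfold atp
  by_cases h : u = v
  · simp [h]
  · have h' : ¬ v = u := fun hh => h hh.symm
    rw [if_neg h, if_neg h', G.adj_comm]

lemma atp_eq_imp (G : SimpleGraph V) (H : SimpleGraph W) {u v : V} {x y : W}
    (h : atp G u v = atp H x y) :
    (u = v ↔ x = y) ∧ (G.Adj u v ↔ H.Adj x y) := by
  unfold atp at h
  by_cases h1 : u = v <;> by_cases h2 : x = y
  · subst h1; subst h2
    exact ⟨by simp, by simp [SimpleGraph.irrefl]⟩
  · rw [if_pos h1, if_neg h2] at h
    split_ifs at h <;> omega
  · rw [if_neg h1, if_pos h2] at h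
    split_ifs at h <;> omega
  · rw [if_neg h1, if_neg h2] at h
    refine ⟨by simp [h1, h2], ?_⟩
    split_ifs at h with h3 h4 h4 <;> simp [h3, h4] <;> omega

lemma initPairColor_eq_one_iff {u v : V} : initPairColor u v = 1 ↔ u = v := by
  unfold initPairColor; split_ifs with h <;> simp [h]

lemma atp_eq_of_pswl_one {G : SimpleGraph V} {H : SimpleGraph W} {u v : V} {x y : W}
    (h : pswl G 1 u v = pswl H 1 x y) : atp G u v = atp H x y := by
  have h3 := pswl_thd (l := 0) h
  have hmem : ((show PSColor 0 from (1 : ℕ)), atp G v u) ∈ (Finset.univ.val.map fun w => (pswl G 0 u w, atp G v w)) := by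
    rw [Multiset.mem_map]
    exact ⟨u, Finset.mem_univ u, by simp [pswl, initPairColor]⟩
  rw [h3] at hmem
  rw [Multiset.mem_map] at hmem
  obtain ⟨z, _, hz⟩ := hmem
  have h1 : initPairColor x z = 1 := congrArg Prod.fst hz
  have hz' : z = x := (initPairColor_eq_one_iff.mp h1).symm
  have h2 : atp H y z = atp G v u := congrArg Prod.snd hz
  rw [atp_comm G u v, ← h2, hz', atp_comm H y x]

lemma degree_count (G : SimpleGraph V) (v : V) :
    G.degree v = Multiset.count 1 (Finset.univ.val.map fun w => atp G v w) := by
  classical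
  rw [Multiset.count_map]
  have h2 : Multiset.filter (fun a => (1 : ℕ) = atp G v a) (Finset.univ : Finset V).val
      = Multiset.filter (fun w => G.Adj v w) (Finset.univ : Finset V).val := by
    refine Multiset.filter_congr fun w _ => ?_
    unfold atp
    by_cases h : v = w
    · subst h; simp [SimpleGraph.irrefl]
    · rw [if_neg h]
      by_cases h3 : G.Adj v w
      · simp [h3]
      · simp [h3]
  rw [h2, ← Finset.filter_val, ← SimpleGraph.neighborFinset_eq_filter]
  rfl

lemma degree_eq_of_pswl_one {G : SimpleGraph V} {H : SimpleGraph W} {u v : V} {x y : W}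
    (h : pswl G 1 u v = pswl H 1 x y) : G.degree v = H.degree y := by
  have h3 := pswl_thd (l := 0) h
  have hsnd := congrArg (Multiset.map Prod.snd) h3
  rw [Multiset.map_map, Multiset.map_map] at hsnd
  rw [degree_count G v, degree_count H y]
  exact congrArg (Multiset.count 1) hsnd

end AuxLemmas

section MatrixEntries

variable {V W : Type*} [Fintype V] [Fintype W]

lemma normLap_apply (G : SimpleGraph V) (u v : V) :
    normLapM G u v =
      (Real.sqrt (G.degree u))⁻¹ * lapM G u v * (Real.sqrt (G.degree v))⁻¹ := by
  rw [normLapM, invSqrtDegM, Matrix.mul_diagonal, Matrix.diagonal_mul]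

lemma lap_entry_eq (G : SimpleGraph V) (H : SimpleGraph W)
    {w v : V} {z y : W} (heq : w = v ↔ z = y) (hadj : G.Adj w v ↔ H.Adj z y)
    (hdw : G.degree w = H.degree z) (hdv : G.degree v = H.degree y) :
    lapM G w v = lapM H z y := by
  rw [lapM, lapM, Matrix.sub_apply, Matrix.sub_apply, degM, degM,
    Matrix.diagonal_apply, Matrix.diagonal_apply, adjM, adjM,
    SimpleGraph.adjMatrix_apply, SimpleGraph.adjMatrix_apply]
  by_cases h : w = v
  · have h2 : z = y := heq.mp h
    have hnadj : ¬ G.Adj w v := by subst h; exact G.irrefl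
    have hnadj2 : ¬ H.Adj z y := by subst h2; exact H.irrefl
    rw [if_pos h, if_pos h2, if_neg hnadj, if_neg hnadj2]
    norm_num
    exact_mod_cast hdw
  · rw [if_neg h, if_neg fun hh => h (heq.mpr hh)]
    by_cases h3 : G.Adj w v
    · rw [if_pos h3, if_pos (hadj.mp h3)]
    · rw [if_neg h3, if_neg fun hh => h3 (hadj.mpr hh)]

lemma entry_eq (c : MatChoice) (G : SimpleGraph V) (H : SimpleGraph W)
    {w v : V} {z y : W} (heq : w = v ↔ z = y) (hadj : G.Adj w v ↔ H.Adj z y)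
    (hdw : G.degree w = H.degree z) (hdv : G.degree v = H.degree y) :
    matOf c G w v = matOf c H z y := by
  have hlap := lap_entry_eq G H heq hadj hdw hdv
  have hdwR : (G.degree w : ℝ) = (H.degree z : ℝ) := by exact_mod_cast hdw
  have hdvR : (G.degree v : ℝ) = (H.degree y : ℝ) := by exact_mod_cast hdv
  cases c with
  | adj =>
    show adjM G w v = adjM H z y
    rw [adjM, adjM, SimpleGraph.adjMatrix_apply, SimpleGraph.adjMatrix_apply]
    by_cases h3 : G.Adj w v
    · rw [if_pos h3, if_pos (hadj.mp h3)]
    · rw [if_neg h3, if_neg fun hh => h3 (hadj.mpr hh)]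
  | lap => exact hlap
  | normLap =>
    show normLapM G w v = normLapM H z y
    rw [normLap_apply, normLap_apply, hlap, hdwR, hdvR]

lemma pow_entry_eq (c : MatChoice) (G : SimpleGraph V) (H : SimpleGraph W) :
    ∀ (k : ℕ) (u v : V) (x y : W), pswl G (k + 2) u v = pswl H (k + 2) x y →
      ((matOf c G) ^ k) u v = ((matOf c H) ^ k) x y := by
  intro k
  induction k with
  | zero =>
    intro u v x y h
    have h1 := pswl_le (show 1 ≤ 0 + 2 by omega) h
    have hiff := (atp_eq_imp G H (atp_eq_of_pswl_one h1)).1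
    rw [pow_zero, pow_zero, Matrix.one_apply, Matrix.one_apply]
    by_cases hd : u = v
    · rw [if_pos hd, if_pos (hiff.mp hd)]
    · rw [if_neg hd, if_neg fun hc => hd (hiff.mpr hc)]
  | succ k ih =>
    intro u v x y h
    have h1 : pswl G 1 u v = pswl H 1 x y := pswl_le (by omega) h
    have hdv : G.degree v = H.degree y := degree_eq_of_pswl_one h1
    have hml := pswl_thd (l := k + 2) h
    rw [pow_succ, pow_succ, Matrix.mul_apply, Matrix.mul_apply]
    refine congrArg Multiset.sum (key_map hml ?_)
    rintro w z hwz
    have hpw : pswl G (k + 2) u w = pswl H (k + 2) x z := congrArg Prod.fst hwz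
    have hat : atp G v w = atp H y z := congrArg Prod.snd hwz
    have hatp := atp_eq_imp G H hat
    have hM : matOf c G w v = matOf c H z y := by
      refine entry_eq c G H ?_ ?_ ?_ hdv
      · exact ⟨fun hh => (hatp.1.mp hh.symm).symm, fun hh => (hatp.1.mpr hh.symm).symm⟩
      · rw [G.adj_comm, H.adj_comm]; exact hatp.2
      · exact degree_eq_of_pswl_one (pswl_le (by omega) hpw)
    rw [ih u w x z hpw, hM]

end MatrixEntries

section Spectral

lemma specdecomp_pow {n : Type*} [Fintype n] [DecidableEq n] {M : Matrix n n ℝ}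
    {Λ : Finset ℝ} {P : ℝ → Matrix n n ℝ} (hp : IsSpectralDecomp M Λ P) (k : ℕ) :
    M ^ k = ∑ lam ∈ Λ, (lam ^ k) • P lam := by
  induction k with
  | zero =>
    simp only [pow_zero, one_smul]
    refine Eq.trans ?_ hp.sum_one.symm
    ext i j
    simp [Matrix.one_apply]
  | succ k ih =>
    have h1 : M ^ (k + 1) = (∑ lam ∈ Λ, (lam ^ k) • P lam) * (∑ mu ∈ Λ, mu • P mu) := by
      rw [pow_succ, ih, hp.sum_smul]
    rw [h1, Finset.sum_mul]
    refine Finset.sum_congr rfl fun lam hlam => ?_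
    rw [Finset.mul_sum, Finset.sum_eq_single lam]
    · rw [smul_mul_smul_comm, hp.idem lam hlam, pow_succ]
    · intro mu hmu hne
      rw [smul_mul_smul_comm, hp.orth lam hlam mu hmu (Ne.symm hne), smul_zero]
    · intro hnot; exact absurd hlam hnot

lemma pow_apply {n : Type*} [Fintype n] [DecidableEq n] {M : Matrix n n ℝ}
    {Λ : Finset ℝ} {P : ℝ → Matrix n n ℝ} (hp : IsSpectralDecomp M Λ P) (k : ℕ) (u v : n) :
    (M ^ k) u v = ∑ lam ∈ Λ, lam ^ k * P lam u v := by
  rw [specdecomp_pow hp k, Matrix.sum_apply]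
  exact Finset.sum_congr rfl fun lam _ => by rw [Matrix.smul_apply, smul_eq_mul]

lemma trace_pow_decomp {n : Type*} [Fintype n] [DecidableEq n] {M : Matrix n n ℝ}
    {Λ : Finset ℝ} {P : ℝ → Matrix n n ℝ} (hp : IsSpectralDecomp M Λ P) (k : ℕ) :
    (M ^ k).trace = ∑ lam ∈ Λ, lam ^ k * (P lam).trace := by
  rw [specdecomp_pow hp k, Matrix.trace_sum]
  exact Finset.sum_congr rfl fun lam _ => by rw [Matrix.trace_smul, smul_eq_mul]

lemma trace_ne_zero {n : Type*} [Fintype n] {P : Matrix n n ℝ}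
    (hs : Pᵀ = P) (hi : P * P = P) (hz : P ≠ 0) : P.trace ≠ 0 := by
  have h1 : P.trace = ∑ i, ∑ j, P j i * P j i := by
    calc P.trace = (P * P).trace := by rw [hi]
      _ = ∑ i, (P * P) i i := rfl
      _ = ∑ i, ∑ j, P j i * P j i := Finset.sum_congr rfl fun i _ => by
          rw [Matrix.mul_apply]
          exact Finset.sum_congr rfl fun j _ => by
            have hsym : P i j = P j i := by conv_lhs => rw [← hs, Matrix.transpose_apply]
            rw [hsym]
  have hne : ∃ i j, P i j ≠ 0 := by
    by_contra hno
    push_neg at hno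
    exact hz (by ext i j; simpa using hno i j)
  obtain ⟨i, j, hij⟩ := hne
  have hpos : 0 < P.trace := by
    rw [h1]
    refine Finset.sum_pos' (fun a _ => Finset.sum_nonneg fun b _ => mul_self_nonneg _)
      ⟨j, Finset.mem_univ j, ?_⟩
    refine Finset.sum_pos' (fun b _ => mul_self_nonneg _) ⟨i, Finset.mem_univ i, ?_⟩
    exact mul_self_pos.mpr hij
  exact ne_of_gt hpos

lemma lagrange_expand (S : Finset ℝ) {lam : ℝ} (hlam : lam ∈ S) (cf : ℝ → ℝ) :
    cf lam = ∑ k ∈ Finset.range S.card,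
      (Lagrange.basis S id lam).coeff k * ∑ mu ∈ S, mu ^ k * cf mu := by
  have hinj : Set.InjOn id (S : Set ℝ) := fun a _ b _ h => h
  have hcard : 0 < S.card := Finset.card_pos.mpr ⟨lam, hlam⟩
  have hdeg : (Lagrange.basis S id lam).natDegree < S.card := by
    rw [Lagrange.natDegree_basis hinj hlam]; omega
  have step1 : cf lam = ∑ mu ∈ S, (Lagrange.basis S id lam).eval mu * cf mu := by
    rw [Finset.sum_eq_single lam]
    · rw [show (Lagrange.basis S id lam).eval lam = 1 from
        Lagrange.eval_basis_self (v := id) hinj hlam, one_mul]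
    · intro mu hmu hne
      rw [show (Lagrange.basis S id lam).eval mu = 0 from
        Lagrange.eval_basis_of_ne (v := id) (fun hh => hne (hh.symm)) hmu, zero_mul]
    · intro hnot; exact absurd hlam hnot
  have step2 : ∀ mu ∈ S, (Lagrange.basis S id lam).eval mu * cf mu
      = ∑ k ∈ Finset.range S.card, (Lagrange.basis S id lam).coeff k * mu ^ k * cf mu := by
    intro mu _
    rw [Polynomial.eval_eq_sum_range' hdeg, Finset.sum_mul]
  calc cf lam = ∑ mu ∈ S, (Lagrange.basis S id lam).eval mu * cf mu := step1
    _ = ∑ mu ∈ S, ∑ k ∈ Finset.range S.card,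
          (Lagrange.basis S id lam).coeff k * mu ^ k * cf mu := Finset.sum_congr rfl step2
    _ = ∑ k ∈ Finset.range S.card, ∑ mu ∈ S,
          (Lagrange.basis S id lam).coeff k * mu ^ k * cf mu := Finset.sum_comm
    _ = ∑ k ∈ Finset.range S.card,
          (Lagrange.basis S id lam).coeff k * ∑ mu ∈ S, mu ^ k * cf mu := by
        refine Finset.sum_congr rfl fun k _ => ?_
        rw [Finset.mul_sum]
        exact Finset.sum_congr rfl fun mu _ => by ring

lemma spec_eq {n m : Type*} [Fintype n] [Fintype m] [DecidableEq n] [DecidableEq m]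
    {M : Matrix n n ℝ} {N : Matrix m m ℝ}
    {Λ₁ Λ₂ : Finset ℝ} {P₁ : ℝ → Matrix n n ℝ} {P₂ : ℝ → Matrix m m ℝ}
    (h1 : IsSpectralDecomp M Λ₁ P₁) (h2 : IsSpectralDecomp N Λ₂ P₂)
    (htr : ∀ k, (M ^ k).trace = (N ^ k).trace) : Λ₁ = Λ₂ := by
  classical
  set S := Λ₁ ∪ Λ₂ with hS
  set c1 : ℝ → ℝ := fun mu => if mu ∈ Λ₁ then (P₁ mu).trace else 0 with hc1
  set c2 : ℝ → ℝ := fun mu => if mu ∈ Λ₂ then (P₂ mu).trace else 0 with hc2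
  have hs1 : ∀ k, ∑ mu ∈ S, mu ^ k * c1 mu = (M ^ k).trace := by
    intro k
    rw [trace_pow_decomp h1 k,
      ← Finset.sum_subset Finset.subset_union_left
        (fun mu _ hnot => by simp [hc1, hnot])]
    exact Finset.sum_congr rfl fun mu hmu => by simp [hc1, hmu]
  have hs2 : ∀ k, ∑ mu ∈ S, mu ^ k * c2 mu = (N ^ k).trace := by
    intro k
    rw [trace_pow_decomp h2 k,
      ← Finset.sum_subset Finset.subset_union_right
        (fun mu _ hnot => by simp [hc2, hnot])]
    exact Finset.sum_congr rfl fun mu hmu => by simp [hc2, hmu]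
  have hkey : ∀ mu ∈ S, c1 mu = c2 mu := by
    intro mu hmu
    rw [lagrange_expand S hmu c1, lagrange_expand S hmu c2]
    refine Finset.sum_congr rfl fun k _ => ?_
    rw [hs1 k, hs2 k, htr k]
  ext lam
  constructor
  · intro hl
    have hls : lam ∈ S := Finset.mem_union_left _ hl
    have hk := hkey lam hls
    by_contra hnot
    rw [show c1 lam = (P₁ lam).trace by simp [hc1, hl],
      show c2 lam = 0 by simp [hc2, hnot]] at hk
    exact trace_ne_zero (h1.symm lam hl) (h1.idem lam hl) (h1.nonzero lam hl) hk
  · intro hl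
    have hls : lam ∈ S := Finset.mem_union_right _ hl
    have hk := hkey lam hls
    by_contra hnot
    rw [show c2 lam = (P₂ lam).trace by simp [hc2, hl],
      show c1 lam = 0 by simp [hc1, hnot]] at hk
    exact trace_ne_zero (h2.symm lam hl) (h2.idem lam hl) (h2.nonzero lam hl) hk.symm

lemma projInv_det {V W : Type*} [Fintype V] [Fintype W] [DecidableEq V] [DecidableEq W]
    {M : Matrix V V ℝ} {N : Matrix W W ℝ} {Λ : Finset ℝ}
    {P₁ : ℝ → Matrix V V ℝ} {P₂ : ℝ → Matrix W W ℝ}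
    (h1 : IsSpectralDecomp M Λ P₁) (h2 : IsSpectralDecomp N Λ P₂)
    {u v : V} {x y : W} (hp : ∀ k < Λ.card, (M ^ k) u v = (N ^ k) x y) :
    projInv Λ P₁ u v = projInv Λ P₂ x y := by
  unfold projInv
  refine Multiset.map_congr rfl fun lam hlam => ?_
  have hlam' : lam ∈ Λ := hlam
  have e1 := lagrange_expand Λ hlam' (fun mu => P₁ mu u v)
  have e2 := lagrange_expand Λ hlam' (fun mu => P₂ mu x y)
  have : P₁ lam u v = P₂ lam x y := by
    rw [e1, e2]
    refine Finset.sum_congr rfl fun k hk => ?_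
    rw [← pow_apply h1 k u v, ← pow_apply h2 k x y, hp k (Finset.mem_range.mp hk)]
  rw [this]

end Spectral

section Assembly

variable {V W : Type*} [Fintype V] [Fintype W]

lemma sum_diag_ite {n : Type*} [Fintype n] [DecidableEq n] (A : Matrix n n ℝ) :
    (∑ p : n × n, if p.1 = p.2 then A p.1 p.2 else 0) = A.trace := by
  rw [Fintype.sum_prod_type]
  have hrow : ∀ u : n, (∑ v : n, if u = v then A u v else 0) = A u u := by
    intro u; rw [Finset.sum_ite_eq]; simp
  simp only [hrow]
  rfl

lemma trace_pow_eq (c : MatChoice) (G : SimpleGraph V) (H : SimpleGraph W)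
    (hPS : PSWLIndist G H) (k : ℕ) :
    ((matOf c G) ^ k).trace = ((matOf c H) ^ k).trace := by
  classical
  have h := hPS (k + 2)
  have hmap : (Finset.univ.val.map
        fun p : V × V => if p.1 = p.2 then ((matOf c G) ^ k) p.1 p.2 else 0) =
      (Finset.univ.val.map
        fun p : W × W => if p.1 = p.2 then ((matOf c H) ^ k) p.1 p.2 else 0) := by
    refine key_map h ?_
    intro a b hab
    have h1 := pswl_le (show 1 ≤ k + 2 by omega) hab
    have hiff := (atp_eq_imp G H (atp_eq_of_pswl_one h1)).1
    by_cases hd : a.1 = a.2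
    · rw [if_pos hd, if_pos (hiff.mp hd), pow_entry_eq c G H k _ _ _ _ hab]
    · rw [if_neg hd, if_neg fun hc => hd (hiff.mpr hc)]
  have hsum := congrArg Multiset.sum hmap
  have b1 : (Finset.univ.val.map
      fun p : V × V => if p.1 = p.2 then ((matOf c G) ^ k) p.1 p.2 else 0).sum
      = ∑ p : V × V, if p.1 = p.2 then ((matOf c G) ^ k) p.1 p.2 else 0 := rfl
  have b2 : (Finset.univ.val.map
      fun p : W × W => if p.1 = p.2 then ((matOf c H) ^ k) p.1 p.2 else 0).sum
      = ∑ p : W × W, if p.1 = p.2 then ((matOf c H) ^ k) p.1 p.2 else 0 := rfl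
  rw [b1, b2, sum_diag_ite, sum_diag_ite] at hsum
  exact hsum

/-- Extract the round-0 "diagonal indicator" from a PSWL color. -/
def diagVal : (r : ℕ) → PSColor r → ℕ
  | 0, c => c
  | r + 1, c => diagVal r c.1

lemma diagVal_pswl (G : SimpleGraph V) :
    ∀ (r : ℕ) (u v : V), diagVal r (pswl G r u v) = initPairColor u v
  | 0, _, _ => rfl
  | r + 1, u, v => diagVal_pswl G r u v

lemma diag_filter {X : Type*} [Fintype X] (Gg : SimpleGraph X) (r : ℕ) :
    Multiset.filter (fun c => diagVal r c = 1)
      ((Finset.univ : Finset (X × X)).val.map fun p => pswl Gg r p.1 p.2)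
    = Finset.univ.val.map fun u : X => pswl Gg r u u := by
  classical
  rw [Multiset.filter_map]
  have hfin : (Finset.univ : Finset (X × X)).filter
        ((fun c => diagVal r c = 1) ∘ fun p : X × X => pswl Gg r p.1 p.2)
      = Finset.map ⟨fun u : X => (u, u), fun a b hab => congrArg Prod.fst hab⟩
          Finset.univ := by
    ext p
    rw [Finset.mem_filter, Finset.mem_map]
    constructor
    · rintro ⟨-, hp⟩
      refine ⟨p.1, Finset.mem_univ _, ?_⟩
      have hd : diagVal r (pswl Gg r p.1 p.2) = 1 := hp
      rw [diagVal_pswl, initPairColor_eq_one_iff] at hd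
      exact Prod.ext rfl hd
    · rintro ⟨a, -, rfl⟩
      refine ⟨Finset.mem_univ _, ?_⟩
      show diagVal r (pswl Gg r a a) = 1
      rw [diagVal_pswl, initPairColor_eq_one_iff]
  have hval := congrArg Finset.val hfin
  rw [Finset.filter_val, Finset.map_val] at hval
  rw [hval, Multiset.map_map]
  rfl

lemma diag_colors (G : SimpleGraph V) (H : SimpleGraph W) (r : ℕ)
    (h : ((Finset.univ : Finset (V × V)).val.map fun p => pswl G r p.1 p.2) =
         ((Finset.univ : Finset (W × W)).val.map fun p => pswl H r p.1 p.2)) :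
    (Finset.univ.val.map fun u : V => pswl G r u u) =
      (Finset.univ.val.map fun x : W => pswl H r x x) := by
  classical
  exact (diag_filter G r).symm.trans
    ((congrArg (Multiset.filter fun c => diagVal r c = 1) h).trans (diag_filter H r))

end Assembly


/-- For each `M ∈ {A, L, L̂}`: if `G` and `H` are
PSWL-indistinguishable, then they are EPWL-indistinguishable with respect
to `M`. -/
theorem pswl_bounds_epwl {V W : Type*} [Fintype V] [Fintype W]
    (G : SimpleGraph V) (H : SimpleGraph W)
    (hG : ∀ v, 0 < G.degree v) (hH : ∀ w, 0 < H.degree w)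
    (c : MatChoice)
    (ΛG : Finset ℝ) (PG : ℝ → Matrix V V ℝ)
    (hPG : IsSpectralDecomp (matOf c G) ΛG PG)
    (ΛH : Finset ℝ) (PH : ℝ → Matrix W W ℝ)
    (hPH : IsSpectralDecomp (matOf c H) ΛH PH)
    (hPS : PSWLIndist G H) :
    NodeIndist (projInv ΛG PG) (projInv ΛH PH) := by
  classical
  by_cases hV : IsEmpty V
  · have h0 := hPS 0
    have hcard := congrArg Multiset.card h0
    simp only [Multiset.card_map] at hcard
    have hv : Fintype.card (V × V) = Fintype.card (W × W) := hcard
    have hW : IsEmpty W := by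
      rw [Fintype.card_prod, Fintype.card_prod] at hv
      have hv0 : Fintype.card V = 0 := Fintype.card_eq_zero
      rw [hv0] at hv
      have : Fintype.card W = 0 := by
        rcases Nat.mul_eq_zero.mp hv.symm with h | h <;> exact h
      exact Fintype.card_eq_zero_iff.mp this
    intro l
    rw [Finset.univ_eq_empty (α := V), Finset.univ_eq_empty (α := W)]
    rfl
  · have hVne : Nonempty V := not_isEmpty_iff.mp hV
    obtain ⟨v0⟩ := hVne
    have hΛGne : ΛG.Nonempty := by
      by_contra hemp
      rw [Finset.not_nonempty_iff_eq_empty] at hemp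
      have h1 := hPG.sum_one
      rw [hemp, Finset.sum_empty] at h1
      have h2 := congrFun (congrFun h1 v0) v0
      rw [Matrix.zero_apply, Matrix.one_apply_eq] at h2
      exact zero_ne_one h2
    have hΛ : ΛG = ΛH := spec_eq hPG hPH (fun k => trace_pow_eq c G H hPS k)
    have hPH' : IsSpectralDecomp (matOf c H) ΛG PH := by rw [hΛ]; exact hPH
    set K := ΛG.card + 2 with hK
    have projDet : ∀ (u v : V) (x y : W), pswl G K u v = pswl H K x y →
        projInv ΛG PG u v = projInv ΛH PH x y := by
      intro u v x y h
      rw [← hΛ]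
      refine projInv_det hPG hPH' ?_
      intro k hk
      exact pow_entry_eq c G H k u v x y (pswl_le (by omega) h)
    have colorDet : ∀ (l : ℕ) (u : V) (x : W),
        pswl G (K + 2 * l) u u = pswl H (K + 2 * l) x x →
        colorFn (projInv ΛG PG) l u = colorFn (projInv ΛH PH) l x := by
      intro l
      induction l with
      | zero => intro u x _; rfl
      | succ l ih =>
        intro u x h
        rw [show K + 2 * (l + 1) = (K + 2 * l + 1) + 1 by ring] at h
        have hfst : pswl G (K + 2 * l) u u = pswl H (K + 2 * l) x x :=
          pswl_le (Nat.le_succ _) (pswl_fst h)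
        have hml := pswl_thd h
        show (colorFn (projInv ΛG PG) l u,
            Finset.univ.val.map fun v => (colorFn (projInv ΛG PG) l v, projInv ΛG PG u v)) =
          (colorFn (projInv ΛH PH) l x,
            Finset.univ.val.map fun y => (colorFn (projInv ΛH PH) l y, projInv ΛH PH x y))
        refine Prod.ext (ih u x hfst) ?_
        have hkeys : (Finset.univ.val.map fun v => pswl G (K + 2 * l + 1) u v) =
            (Finset.univ.val.map fun y => pswl H (K + 2 * l + 1) x y) := by
          have hm := congrArg (Multiset.map Prod.fst) hml
          rw [Multiset.map_map, Multiset.map_map] at hm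
          exact hm
        show (Finset.univ.val.map fun v => (colorFn (projInv ΛG PG) l v, projInv ΛG PG u v)) =
          (Finset.univ.val.map fun y => (colorFn (projInv ΛH PH) l y, projInv ΛH PH x y))
        refine key_map hkeys ?_
        intro a b hab
        have hcol := ih a b (pswl_snd hab)
        have hproj := projDet u a x b (pswl_le (by omega) hab)
        rw [hcol, hproj]
    intro l
    exact key_map (diag_colors G H (K + 2 * l) (hPS (K + 2 * l))) (colorDet l)


end EPWL
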